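/- (Fourth version of Peano's Theorem, parts 1 and 2.) Let t0, y0 ∈ ℝ, a > 0, I = [t0, t0+a], let f : I × ℝ → ℝ be continuous, and suppose the problem y' = f(t,y), y(t0) = y0 has a strict lower solution α and a strict upper solution β on I. Then: (1) there exists a differentiable φ : I → ℝ with φ(t0) = y0 and φ' = f(t, φ) on I; (2) if φ is a solution of the problem on some subinterval [t0, t0+ε] with 0 < ε < a, then φ extends to a solution defined on all of I, and every solution φ defined on I satisfies α(t) < φ(t) < β(t) for all t ∈ (t0, t0+a]. -/

import Mathlib

open Set

open Filter Topology

lemma clamp_lip (lo hi s t : ℝ) : |max lo (min s hi) - max lo (min t hi)| ≤ |s - t| := by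
  have h1 : |min s hi - min t hi| ≤ |s - t| := by
    have := abs_min_sub_min_le_max s hi t hi
    simpa using this
  have h2 := abs_max_sub_max_le_abs (min s hi) (min t hi) lo
  calc |max lo (min s hi) - max lo (min t hi)|
      = |max (min s hi) lo - max (min t hi) lo| := by rw [max_comm lo, max_comm lo]
    _ ≤ |min s hi - min t hi| := h2
    _ ≤ |s - t| := h1

lemma clamp_mem {lo hi : ℝ} (h : lo ≤ hi) (s : ℝ) : max lo (min s hi) ∈ Icc lo hi :=
  ⟨le_max_left _ _, max_le h (min_le_right _ _)⟩

lemma clamp_eq {lo hi s : ℝ} (h : s ∈ Icc lo hi) : max lo (min s hi) = s := by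
  rw [min_eq_left h.2, max_eq_right h.1]

/-- Strict comparison: if `u' t < v' t` whenever `u t = v t`, and `u t0 ≤ v t0`,
then `u < v` strictly to the right of `t0`. -/
lemma strict_comp {t0 T : ℝ} {u v u' v' : ℝ → ℝ}
    (hu : ∀ t ∈ Icc t0 T, HasDerivWithinAt u (u' t) (Icc t0 T) t)
    (hv : ∀ t ∈ Icc t0 T, HasDerivWithinAt v (v' t) (Icc t0 T) t)
    (h0 : u t0 ≤ v t0)
    (hlt : ∀ t ∈ Icc t0 T, u t = v t → u' t < v' t) :
    ∀ t ∈ Ioc t0 T, u t < v t := by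
  intro t1 ht1
  by_contra hcon
  push_neg at hcon
  set w : ℝ → ℝ := fun t => v t - u t with hw
  have hT : t0 ≤ T := (ht1.1.trans_le ht1.2).le
  have ht0m : t0 ∈ Icc t0 T := ⟨le_rfl, hT⟩
  have hwd : ∀ t ∈ Icc t0 T, HasDerivWithinAt w (v' t - u' t) (Icc t0 T) t :=
    fun t ht => (hv t ht).sub (hu t ht)
  have hwc : ContinuousOn w (Icc t0 T) := fun t ht => (hwd t ht).continuousWithinAt
  have hsub : Ioo t0 t1 ⊆ Icc t0 T := fun s hs => ⟨hs.1.le, hs.2.le.trans ht1.2⟩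
  have hne : (𝓝[Ioo t0 t1] t0).NeBot := by
    apply mem_closure_iff_nhdsWithin_neBot.mp
    rw [closure_Ioo (ne_of_lt ht1.1)]
    exact ⟨le_rfl, ht1.1.le⟩
  -- find t2 ∈ Ioo t0 t1 with 0 < w t2
  obtain ⟨t2, ht2, hwt2⟩ : ∃ t2 ∈ Ioo t0 t1, 0 < w t2 := by
    rcases eq_or_lt_of_le (sub_nonneg.mpr h0 : (0:ℝ) ≤ w t0) with h | h
    · have heq : u t0 = v t0 := (sub_eq_zero.mp h.symm).symm
      have hd0 : 0 < v' t0 - u' t0 := sub_pos.mpr (hlt t0 ht0m heq)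
      have htend : Tendsto (slope w t0) (𝓝[Ioo t0 t1] t0) (𝓝 (v' t0 - u' t0)) :=
        ((hasDerivWithinAt_iff_tendsto_slope.mp (hwd t0 ht0m)).mono_left
          (nhdsWithin_mono _ (fun s hs => ⟨hsub hs, ne_of_gt hs.1⟩)))
      have hev : ∀ᶠ s in 𝓝[Ioo t0 t1] t0, 0 < slope w t0 s :=
        htend.eventually (eventually_gt_nhds hd0)
      obtain ⟨t2, hmem, hsl⟩ := (hev.and self_mem_nhdsWithin).exists
      refine ⟨t2, hsl, ?_⟩
      have hpos : 0 < t2 - t0 := sub_pos.mpr hsl.1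
      have : 0 < (w t2 - w t0) / (t2 - t0) := by simpa [slope_def_field] using hmem
      have h2 := mul_pos this hpos
      rw [div_mul_cancel₀ _ (ne_of_gt hpos)] at h2
      have hw0 : w t0 = 0 := by simpa [hw] using h.symm
      linarith
    · have htend : Tendsto w (𝓝[Ioo t0 t1] t0) (𝓝 (w t0)) :=
        (hwc t0 ht0m).mono_left (nhdsWithin_mono _ hsub)
      have hev : ∀ᶠ s in 𝓝[Ioo t0 t1] t0, 0 < w s := htend.eventually (eventually_gt_nhds h)
      obtain ⟨t2, h1, h2⟩ := (hev.and self_mem_nhdsWithin).exists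
      exact ⟨t2, h2, h1⟩
  have hIccsub : Icc t2 t1 ⊆ Icc t0 T := Icc_subset_Icc ht2.1.le ht1.2
  set S := {t ∈ Icc t2 t1 | w t ≤ 0} with hS
  have hSne : S.Nonempty := ⟨t1, ⟨⟨ht2.2.le, le_rfl⟩, by simpa [hw] using sub_nonpos.mpr hcon⟩⟩
  have hSbd : BddBelow S := ⟨t2, fun x hx => hx.1.1⟩
  have hScl : IsClosed S := by
    have : S = Icc t2 t1 ∩ w ⁻¹' (Iic 0) := by ext x; simp [hS, and_comm]
    rw [this]
    exact (hwc.mono hIccsub).preimage_isClosed_of_isClosed isClosed_Icc isClosed_Iic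
  set s := sInf S with hsdef
  have hsS : s ∈ S := hScl.csInf_mem hSne hSbd
  have hst2 : t2 < s := by
    rcases lt_or_eq_of_le hsS.1.1 with h | h
    · exact h
    · exact absurd (h ▸ hsS.2) (not_le.mpr hwt2)
  have hlow : ∀ t ∈ Ico t2 s, 0 < w t := by
    intro t ht
    by_contra hc
    push_neg at hc
    have : t ∈ S := ⟨⟨ht.1, ht.2.le.trans hsS.1.2⟩, hc⟩
    exact absurd (csInf_le hSbd this) (not_le.mpr ht.2)
  have hsIcc : s ∈ Icc t0 T := hIccsub hsS.1
  have hneb : (𝓝[Ico t2 s] s).NeBot := by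
    apply mem_closure_iff_nhdsWithin_neBot.mp
    rw [closure_Ico (ne_of_lt hst2)]
    exact ⟨hst2.le, le_rfl⟩
  have hws0 : w s = 0 := by
    refine le_antisymm hsS.2 ?_
    have htend : Tendsto w (𝓝[Ico t2 s] s) (𝓝 (w s)) :=
      (hwc s hsIcc).mono_left (nhdsWithin_mono _ (fun x hx =>
        ⟨(ht2.1.le.trans hx.1), (hx.2.le.trans hsIcc.2)⟩))
    exact ge_of_tendsto htend (eventually_mem_nhdsWithin.mono fun x hx => (hlow x hx).le)
  have hd : 0 < v' s - u' s := by
    have heq : u s = v s := by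
      have : v s - u s = 0 := hws0
      linarith
    exact sub_pos.mpr (hlt s hsIcc heq)
  have htend : Tendsto (slope w s) (𝓝[Ico t2 s] s) (𝓝 (v' s - u' s)) :=
    (hasDerivWithinAt_iff_tendsto_slope.mp (hwd s hsIcc)).mono_left
      (nhdsWithin_mono _ (fun x hx =>
        ⟨⟨ht2.1.le.trans hx.1, hx.2.le.trans hsIcc.2⟩, ne_of_lt hx.2⟩))
  have hle : v' s - u' s ≤ 0 := by
    refine le_of_tendsto htend (eventually_mem_nhdsWithin.mono fun x hx => ?_)
    rw [slope_def_field]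
    apply div_nonpos_of_nonneg_of_nonpos
    · rw [hws0]; linarith [hlow x hx]
    · linarith [hx.2]
  linarith

/-- Peano existence with strict lower and upper fences. -/
lemma peano_exists (t0 T y0 : ℝ) (hT : t0 < T)
    (f : ℝ → ℝ → ℝ)
    (hf : ContinuousOn (fun p : ℝ × ℝ => f p.1 p.2) (Icc t0 T ×ˢ (univ : Set ℝ)))
    (α β α' β' : ℝ → ℝ)
    (hαd : ∀ t ∈ Icc t0 T, HasDerivWithinAt α (α' t) (Icc t0 T) t)
    (hα0 : α t0 ≤ y0)
    (hαf : ∀ t ∈ Icc t0 T, α' t < f t (α t))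
    (hβd : ∀ t ∈ Icc t0 T, HasDerivWithinAt β (β' t) (Icc t0 T) t)
    (hβ0 : y0 ≤ β t0)
    (hβf : ∀ t ∈ Icc t0 T, f t (β t) < β' t) :
    ∃ φ : ℝ → ℝ, φ t0 = y0 ∧
      ∀ t ∈ Icc t0 T, HasDerivWithinAt φ (f t (φ t)) (Icc t0 T) t := by
  have hT' : t0 ≤ T := hT.le
  have ht0m : t0 ∈ Icc t0 T := ⟨le_rfl, hT'⟩
  have hαc : ContinuousOn α (Icc t0 T) := fun t ht => (hαd t ht).continuousWithinAt
  have hβc : ContinuousOn β (Icc t0 T) := fun t ht => (hβd t ht).continuousWithinAt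
  -- bounds for α and β
  obtain ⟨Cα, hCα⟩ := isCompact_Icc.exists_bound_of_continuousOn hαc
  obtain ⟨Cβ, hCβ⟩ := isCompact_Icc.exists_bound_of_continuousOn hβc
  set m : ℝ := -(|Cα| + |Cβ|) with hm
  set M : ℝ := |Cα| + |Cβ| with hM
  have hαm : ∀ t ∈ Icc t0 T, α t ∈ Icc m M := by
    intro t ht
    have := hCα t ht
    rw [Real.norm_eq_abs] at this
    constructor <;> [skip; skip] <;>
      cases' abs_le.mp (this.trans (le_abs_self Cα)) with h1 h2 <;>
      simp [hm, hM] <;> nlinarith [abs_nonneg Cβ]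
  have hβm : ∀ t ∈ Icc t0 T, β t ∈ Icc m M := by
    intro t ht
    have := hCβ t ht
    rw [Real.norm_eq_abs] at this
    cases' abs_le.mp (this.trans (le_abs_self Cβ)) with h1 h2
    constructor <;> simp [hm, hM] <;> nlinarith [abs_nonneg Cα]
  have hmM : m ≤ M := ((hαm t0 ht0m).1).trans ((hαm t0 ht0m).2)
  have hy0 : y0 ∈ Icc m M := ⟨(hαm t0 ht0m).1.trans hα0, hβ0.trans (hβm t0 ht0m).2⟩
  -- clamping maps
  set pT : ℝ → ℝ := fun t => max t0 (min t T) with hpT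
  set pY : ℝ → ℝ := fun y => max m (min y M) with hpY
  have hpTmem : ∀ t, pT t ∈ Icc t0 T := fun t => clamp_mem hT' t
  have hpYmem : ∀ y, pY y ∈ Icc m M := fun y => clamp_mem hmM y
  have hpTeq : ∀ t ∈ Icc t0 T, pT t = t := fun t ht => clamp_eq ht
  have hpYeq : ∀ y ∈ Icc m M, pY y = y := fun y hy => clamp_eq hy
  have hpTc : Continuous pT := continuous_const.max (continuous_id.min continuous_const)
  have hpYc : Continuous pY := continuous_const.max (continuous_id.min continuous_const)
  -- the truncated right-hand side
  set G : ℝ × ℝ → ℝ := fun p => f (pT p.1) (pY p.2) with hG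
  have hGeq : ∀ t ∈ Icc t0 T, ∀ y ∈ Icc m M, G (t, y) = f t y := by
    intro t ht y hy
    simp only [hG]
    rw [hpTeq t ht, hpYeq y hy]
  have hGcont : Continuous G := by
    have hmap : ∀ p : ℝ × ℝ, (pT p.1, pY p.2) ∈ Icc t0 T ×ˢ (univ : Set ℝ) :=
      fun p => ⟨hpTmem p.1, mem_univ _⟩
    exact hf.comp_continuous ((hpTc.comp continuous_fst).prodMk (hpYc.comp continuous_snd)) hmap
  -- bound for G
  set K : Set (ℝ × ℝ) := Icc t0 T ×ˢ Icc m M with hK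
  have hKcomp : IsCompact K := isCompact_Icc.prod isCompact_Icc
  obtain ⟨C1, hC1⟩ := hKcomp.exists_bound_of_continuousOn (hf.mono (by
    intro p hp; exact ⟨hp.1, mem_univ _⟩))
  set C0 : ℝ := |C1| with hC0
  have hGbd : ∀ p : ℝ × ℝ, |G p| ≤ C0 := by
    intro p
    have := hC1 (pT p.1, pY p.2) ⟨hpTmem p.1, hpYmem p.2⟩
    rw [Real.norm_eq_abs] at this
    exact this.trans (le_abs_self C1)
  have hC0nn : 0 ≤ C0 := abs_nonneg _
  -- uniform continuity of G
  have hGu : ∀ ε > (0:ℝ), ∃ δ > (0:ℝ), ∀ p q : ℝ × ℝ, dist p q ≤ δ → |G p - G q| ≤ ε := by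
    intro ε hε
    have hfu : UniformContinuousOn (fun p : ℝ × ℝ => f p.1 p.2) K :=
      hKcomp.uniformContinuousOn_of_continuous (hf.mono (fun p hp => ⟨hp.1, mem_univ _⟩))
    rw [Metric.uniformContinuousOn_iff] at hfu
    obtain ⟨δ, hδ, hδ'⟩ := hfu ε hε
    refine ⟨δ/2, by linarith, fun p q hpq => ?_⟩
    have hmap : ∀ r : ℝ × ℝ, (pT r.1, pY r.2) ∈ K := fun r => ⟨hpTmem r.1, hpYmem r.2⟩
    have hd : dist (pT p.1, pY p.2) (pT q.1, pY q.2) < δ := by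
      rw [Prod.dist_eq]
      have h1 : dist (pT p.1) (pT q.1) ≤ dist p.1 q.1 := by
        rw [Real.dist_eq, Real.dist_eq]; exact clamp_lip t0 T p.1 q.1
      have h2 : dist (pY p.2) (pY q.2) ≤ dist p.2 q.2 := by
        rw [Real.dist_eq, Real.dist_eq]; exact clamp_lip m M p.2 q.2
      have h3 : dist p.1 q.1 ≤ dist p q := by rw [Prod.dist_eq]; exact le_max_left _ _
      have h4 : dist p.2 q.2 ≤ dist p q := by rw [Prod.dist_eq]; exact le_max_right _ _
      have : max (dist (pT p.1) (pT q.1)) (dist (pY p.2) (pY q.2)) ≤ dist p q :=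
        max_le (h1.trans h3) (h2.trans h4)
      linarith [hpq]
    have := hδ' _ (hmap p) _ (hmap q) hd
    rw [Real.dist_eq] at this
    exact this.le
  -- Lipschitz sup-convolution approximations from above
  set F : ℕ → ℝ × ℝ → ℝ :=
    fun n p => (⨆ q : ℝ × ℝ, (G q - ((n:ℝ)+1) * dist p q)) + 1/((n:ℝ)+1) with hF
  have hnpos : ∀ n : ℕ, (0:ℝ) < (n:ℝ)+1 := fun n => by positivity
  have hbdd : ∀ (n : ℕ) (p : ℝ × ℝ),
      BddAbove (range fun q : ℝ × ℝ => G q - ((n:ℝ)+1) * dist p q) := by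
    intro n p
    refine ⟨C0, ?_⟩
    rintro x ⟨q, rfl⟩
    beta_reduce
    have := (abs_le.mp (hGbd q)).2
    have hprod : 0 ≤ ((n:ℝ)+1) * dist p q := mul_nonneg (hnpos n).le dist_nonneg
    linarith
  have hFgt : ∀ (n : ℕ) (p : ℝ × ℝ), G p < F n p := by
    intro n p
    have h1 : G p ≤ ⨆ q : ℝ × ℝ, (G q - ((n:ℝ)+1) * dist p q) := by
      have := le_ciSup (hbdd n p) p
      simpa using this
    have h2 : (0:ℝ) < 1/((n:ℝ)+1) := by positivity
    simp only [hF]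
    linarith
  have hFub : ∀ (n : ℕ) (p : ℝ × ℝ), F n p ≤ C0 + 1 := by
    intro n p
    have h1 : (⨆ q : ℝ × ℝ, (G q - ((n:ℝ)+1) * dist p q)) ≤ C0 := by
      refine ciSup_le fun q => ?_
      beta_reduce
      have := (abs_le.mp (hGbd q)).2
      have hprod : 0 ≤ ((n:ℝ)+1) * dist p q := mul_nonneg (hnpos n).le dist_nonneg
      linarith
    have h2 : 1/((n:ℝ)+1) ≤ 1 := by
      rw [div_le_one (hnpos n)]; linarith [Nat.cast_nonneg (α := ℝ) n]
    simp only [hF]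
    linarith
  have hFbd : ∀ (n : ℕ) (p : ℝ × ℝ), |F n p| ≤ C0 + 1 := by
    intro n p
    rw [abs_le]
    refine ⟨?_, hFub n p⟩
    have := (abs_le.mp (hGbd p)).1
    linarith [hFgt n p]
  have hFanti : ∀ (n : ℕ) (p : ℝ × ℝ), F (n+1) p < F n p := by
    intro n p
    have h1 : (⨆ q : ℝ × ℝ, (G q - ((n:ℝ)+1+1) * dist p q)) ≤
        ⨆ q : ℝ × ℝ, (G q - ((n:ℝ)+1) * dist p q) := by
      refine ciSup_le fun q => ?_
      beta_reduce
      refine le_trans ?_ (le_ciSup (hbdd n p) q)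
      beta_reduce
      nlinarith [dist_nonneg (x := p) (y := q)]
    have h2 : 1/((n:ℝ)+1+1) < 1/((n:ℝ)+1) := by
      apply one_div_lt_one_div_of_lt (hnpos n); linarith
    simp only [hF]
    push_cast
    linarith
  have hFlipkey : ∀ (n : ℕ) (p p' : ℝ × ℝ),
      (⨆ q : ℝ × ℝ, (G q - ((n:ℝ)+1) * dist p q)) ≤
        (⨆ q : ℝ × ℝ, (G q - ((n:ℝ)+1) * dist p' q)) + ((n:ℝ)+1) * dist p p' := by
    intro n p p'
    refine ciSup_le fun q => ?_
    beta_reduce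
    have htri : dist p' q ≤ dist p' p + dist p q := dist_triangle _ _ _
    have : G q - ((n:ℝ)+1) * dist p q ≤
        (G q - ((n:ℝ)+1) * dist p' q) + ((n:ℝ)+1) * dist p p' := by
      have hd : dist p' p = dist p p' := dist_comm _ _
      have h5 : ((n:ℝ)+1) * dist p' q ≤ ((n:ℝ)+1) * (dist p' p + dist p q) :=
        mul_le_mul_of_nonneg_left htri (hnpos n).le
      rw [hd] at h5
      nlinarith
    have h6 := le_ciSup (hbdd n p') q
    beta_reduce at h6
    linarith
  have hFlip : ∀ (n : ℕ) (p p' : ℝ × ℝ), |F n p - F n p'| ≤ ((n:ℝ)+1) * dist p p' := by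
    intro n p p'
    rw [abs_sub_le_iff]
    constructor
    · simp only [hF]
      have := hFlipkey n p p'
      linarith
    · simp only [hF]
      have := hFlipkey n p' p
      rw [dist_comm] at this
      linarith
  have hFcontfix : ∀ (n : ℕ) (x : ℝ), Continuous (fun t => F n (t, x)) := by
    intro n x
    rw [Metric.continuous_iff]
    intro t ε hε
    refine ⟨ε / ((n:ℝ)+1), by positivity, fun s hs => ?_⟩
    rw [Real.dist_eq] at hs ⊢
    calc |F n (s, x) - F n (t, x)| ≤ ((n:ℝ)+1) * dist (s,x) (t,x) := hFlip n _ _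
      _ = ((n:ℝ)+1) * |s - t| := by rw [Prod.dist_eq]; simp [Real.dist_eq]
      _ < ε := by
          rw [← lt_div_iff₀' (hnpos n)]
          exact hs
  -- uniform convergence of F to G
  have hFconv : ∀ ε > (0:ℝ), ∃ N : ℕ, ∀ n ≥ N, ∀ p : ℝ × ℝ, F n p ≤ G p + ε := by
    intro ε hε
    obtain ⟨δ, hδ, hδ'⟩ := hGu (ε/3) (by linarith)
    obtain ⟨N, hN⟩ := exists_nat_ge (max (2*C0/δ) (3/ε))
    refine ⟨N, fun n hn p => ?_⟩
    have hnN : (N:ℝ) ≤ (n:ℝ) := Nat.cast_le.mpr hn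
    have hNδ : 2*C0/δ ≤ (N:ℝ) := le_trans (le_max_left _ _) hN
    have hNε : 3/ε ≤ (N:ℝ) := le_trans (le_max_right _ _) hN
    have h1 : (⨆ q : ℝ × ℝ, (G q - ((n:ℝ)+1) * dist p q)) ≤ G p + ε/3 := by
      refine ciSup_le fun q => ?_
      beta_reduce
      rcases le_or_gt (dist p q) δ with h | h
      · have := hδ' p q h
        have h2 : G q - G p ≤ ε/3 := by
          have := (abs_le.mp this).1
          linarith
        have hprod : 0 ≤ ((n:ℝ)+1) * dist p q := mul_nonneg (hnpos n).le dist_nonneg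
        linarith
      · have h2 : 2*C0 ≤ ((n:ℝ)+1) * δ := by
          rw [div_le_iff₀ hδ] at hNδ
          nlinarith
        have h3 : ((n:ℝ)+1) * δ ≤ ((n:ℝ)+1) * dist p q := by
          apply mul_le_mul_of_nonneg_left h.le (hnpos n).le
        have h4 := (abs_le.mp (hGbd q)).2
        have h5 := (abs_le.mp (hGbd p)).1
        linarith
    have h2 : 1/((n:ℝ)+1) ≤ ε/3 := by
      rw [div_le_iff₀ (hnpos n)]
      rw [div_le_iff₀ hε] at hNε
      nlinarith
    simp only [hF]
    linarith
  -- F n is (globally) continuous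
  have hFcont : ∀ n : ℕ, Continuous (F n) := by
    intro n
    have : LipschitzWith (⟨(n:ℝ)+1, (hnpos n).le⟩ : NNReal) (F n) := by
      apply LipschitzWith.of_dist_le_mul
      intro p q
      rw [Real.dist_eq]
      exact hFlip n p q
    exact this.continuous
  -- Picard-Lindelof solutions for each approximation
  have hex : ∀ n : ℕ, ∃ φ : ℝ → ℝ, φ t0 = y0 ∧
      ∀ t ∈ Icc t0 T, HasDerivWithinAt φ (F n (t, φ t)) (Icc t0 T) t := by
    intro n
    have hpl : IsPicardLindelof (fun t x => F n (t, x)) (tmin := t0) (tmax := T) ⟨t0, ht0m⟩ y0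
        (⟨(C0+1) * max (T - t0) (t0 - t0), mul_nonneg (by linarith)
          (le_trans (sub_self t0).symm.le (le_max_right _ _))⟩ : NNReal) 0
        (⟨C0+1, by linarith⟩ : NNReal) (⟨(n:ℝ)+1, (hnpos n).le⟩ : NNReal) := by
      constructor
      · intro t ht
        apply LipschitzOnWith.of_dist_le_mul
        intro x _ y _
        rw [Real.dist_eq, Real.dist_eq]
        calc |F n (t, x) - F n (t, y)| ≤ ((n:ℝ)+1) * dist (t, x) (t, y) := hFlip n _ _
          _ = ((n:ℝ)+1) * |x - y| := by
              rw [Prod.dist_eq]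
              simp [Real.dist_eq]
      · exact fun x _ => (hFcontfix n x).continuousOn
      · intro t _ x _
        rw [Real.norm_eq_abs]
        exact hFbd n (t, x)
      · show (C0+1) * max (T - t0) (t0 - t0) ≤ (C0+1) * max (T - t0) (t0 - t0) - ((0:NNReal):ℝ)
        rw [NNReal.coe_zero, sub_zero]
    exact hpl.exists_eq_forall_mem_Icc_hasDerivWithinAt₀
  choose φs hφ0 hφd using hex
  -- α is a strict lower bound for every φs n
  have hαle : ∀ (n : ℕ), ∀ t ∈ Icc t0 T, α t ≤ φs n t := by
    intro n t ht
    have hstrict := strict_comp hαd (hφd n) (hα0.trans_eq (hφ0 n).symm) ?_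
    · rcases eq_or_lt_of_le ht.1 with h | h
      · rw [← h, hφ0 n]; exact hα0
      · exact (hstrict t ⟨h, ht.2⟩).le
    · intro s hs heq
      have h1 := hαf s hs
      have h2 := hFgt n (s, α s)
      rw [hGeq s hs (α s) (hαm s hs)] at h2
      rw [← heq]
      linarith
  -- the sequence φs is strictly decreasing
  have hmono : ∀ (n : ℕ), ∀ t ∈ Icc t0 T, φs (n+1) t ≤ φs n t := by
    intro n t ht
    have hstrict := strict_comp (hφd (n+1)) (hφd n) (by rw [hφ0, hφ0]) ?_
    · rcases eq_or_lt_of_le ht.1 with h | h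
      · rw [← h, hφ0, hφ0]
      · exact (hstrict t ⟨h, ht.2⟩).le
    · intro s _ heq
      rw [heq]
      exact hFanti n (s, φs n s)
  have hanti : ∀ t ∈ Icc t0 T, Antitone (fun n => φs n t) :=
    fun t ht => antitone_nat_of_succ_le (fun n => hmono n t ht)
  have hbddb : ∀ t ∈ Icc t0 T, BddBelow (range fun n => φs n t) := by
    intro t ht
    refine ⟨α t, ?_⟩
    rintro x ⟨n, rfl⟩
    exact hαle n t ht
  set Lf : ℝ → ℝ := fun t => ⨅ n, φs n t with hLf
  have htendL : ∀ t ∈ Icc t0 T, Tendsto (fun n => φs n t) atTop (𝓝 (Lf t)) :=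
    fun t ht => tendsto_atTop_ciInf (hanti t ht) (hbddb t ht)
  -- uniform Lipschitz bound for the φs and hence for Lf
  have hφlip : ∀ n : ℕ, LipschitzOnWith (C0+1).toNNReal (φs n) (Icc t0 T) := by
    intro n
    apply (convex_Icc t0 T).lipschitzOnWith_of_nnnorm_hasDerivWithin_le (hφd n)
    intro x hx
    rw [← NNReal.coe_le_coe, coe_nnnorm, Real.coe_toNNReal _ (by linarith : (0:ℝ) ≤ C0+1),
      Real.norm_eq_abs]
    exact hFbd n (x, φs n x)
  have hLlip : LipschitzOnWith (C0+1).toNNReal Lf (Icc t0 T) := by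
    apply LipschitzOnWith.of_dist_le_mul
    intro x hx y hy
    have htd : Tendsto (fun n => dist (φs n x) (φs n y)) atTop (𝓝 (dist (Lf x) (Lf y))) :=
      ((htendL x hx).dist (htendL y hy))
    refine le_of_tendsto htd (Eventually.of_forall fun n => ?_)
    exact (hφlip n).dist_le_mul x hx y hy
  have hLcont : ContinuousOn Lf (Icc t0 T) := hLlip.continuousOn
  set φbar : ℝ → ℝ := fun t => Lf (pT t) with hφbar
  have hφbarc : Continuous φbar := hLcont.comp_continuous hpTc hpTmem
  have hφbareq : ∀ t ∈ Icc t0 T, φbar t = Lf t := fun t ht => by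
    simp only [hφbar]; rw [hpTeq t ht]
  have hφscont : ∀ n : ℕ, ContinuousOn (φs n) (Icc t0 T) :=
    fun n x hx => (hφd n x hx).continuousWithinAt
  -- integral identity for each approximation
  have hIntId : ∀ (n : ℕ), ∀ t ∈ Icc t0 T,
      φs n t = y0 + ∫ s in t0..t, F n (s, φs n s) := by
    intro n t ht
    have hcont : ContinuousOn (φs n) (Icc t0 t) :=
      (hφscont n).mono (Icc_subset_Icc le_rfl ht.2)
    have hderiv : ∀ x ∈ Ioo t0 t, HasDerivWithinAt (φs n) (F n (x, φs n x)) (Ioi x) x := by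
      intro x hx
      have hxI : x ∈ Icc t0 T := ⟨hx.1.le, hx.2.le.trans ht.2⟩
      exact ((hφd n x hxI).hasDerivAt
        (Icc_mem_nhds hx.1 (lt_of_lt_of_le hx.2 ht.2))).hasDerivWithinAt
    have hint : IntervalIntegrable (fun s => F n (s, φs n s)) MeasureTheory.volume t0 t := by
      apply ContinuousOn.intervalIntegrable
      rw [uIcc_of_le ht.1]
      exact (hFcont n).comp_continuousOn (continuousOn_id.prodMk hcont)
    have key := intervalIntegral.integral_eq_sub_of_hasDeriv_right_of_le ht.1 hcont hderiv hint
    rw [hφ0 n] at key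
    linarith
  -- limit of the integrals
  have hlim : ∀ t ∈ Icc t0 T,
      Tendsto (fun n => ∫ s in t0..t, F n (s, φs n s)) atTop
        (𝓝 (∫ s in t0..t, G (s, φbar s))) := by
    intro t ht
    apply intervalIntegral.tendsto_integral_filter_of_dominated_convergence
      (bound := fun _ => C0 + 1)
    · refine Eventually.of_forall fun n => ?_
      apply ContinuousOn.aestronglyMeasurable ?_ measurableSet_uIoc
      rw [uIoc_of_le ht.1]
      exact ((hFcont n).comp_continuousOn (continuousOn_id.prodMk
        ((hφscont n).mono ((Ioc_subset_Icc_self).trans (Icc_subset_Icc le_rfl ht.2)))))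
    · refine Eventually.of_forall fun n => ?_
      refine MeasureTheory.ae_of_all _ fun s _ => ?_
      rw [Real.norm_eq_abs]
      exact hFbd n _
    · exact intervalIntegrable_const
    · refine MeasureTheory.ae_of_all _ fun s hs => ?_
      rw [uIoc_of_le ht.1] at hs
      have hsI : s ∈ Icc t0 T := ⟨hs.1.le, hs.2.trans ht.2⟩
      rw [hφbareq s hsI]
      rw [Metric.tendsto_atTop]
      intro ε hε
      obtain ⟨N1, hN1⟩ := hFconv (ε/2) (by linarith)
      have hGt : Tendsto (fun n => G (s, φs n s)) atTop (𝓝 (G (s, Lf s))) :=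
        (hGcont.tendsto _).comp (tendsto_const_nhds.prodMk_nhds (htendL s hsI))
      rw [Metric.tendsto_atTop] at hGt
      obtain ⟨N2, hN2⟩ := hGt (ε/2) (by linarith)
      refine ⟨max N1 N2, fun n hn => ?_⟩
      have h1 := hN1 n (le_of_max_le_left hn) (s, φs n s)
      have h2 := hFgt n (s, φs n s)
      have h3 := hN2 n (le_of_max_le_right hn)
      rw [Real.dist_eq] at h3 ⊢
      have h4 := abs_lt.mp h3
      rw [abs_lt]
      set A := F n (s, φs n s) with hA
      set B := G (s, φs n s) with hB
      set D := G (s, Lf s) with hD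
      obtain ⟨h41, h42⟩ := h4
      clear_value A B D
      clear hA hB hD hGt hN2 hN1 h3
      constructor
      · show -ε < A - D
        linarith
      · show A - D < ε
        linarith
  -- the limit function satisfies the integral equation
  have hLId : ∀ t ∈ Icc t0 T, Lf t = y0 + ∫ s in t0..t, G (s, φbar s) := by
    intro t ht
    refine tendsto_nhds_unique (htendL t ht) ?_
    have h2 := (tendsto_const_nhds (x := y0)).add (hlim t ht)
    exact h2.congr fun n => (hIntId n t ht).symm
  -- the solution
  set g0 : ℝ → ℝ := fun s => G (s, φbar s) with hg0
  have hg0c : Continuous g0 := hGcont.comp (continuous_id.prodMk hφbarc)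
  set ψ : ℝ → ℝ := fun t => y0 + ∫ s in t0..t, g0 s with hψ
  have hψd : ∀ t : ℝ, HasDerivAt ψ (g0 t) t := by
    intro t
    have h := intervalIntegral.integral_hasDerivAt_right
      (hg0c.intervalIntegrable t0 t)
      (hg0c.stronglyMeasurable.stronglyMeasurableAtFilter)
      hg0c.continuousAt
    exact h.const_add y0
  have hψ0 : ψ t0 = y0 := by
    simp only [hψ, intervalIntegral.integral_same, add_zero]
  have hψeq : ∀ t ∈ Icc t0 T, ψ t = Lf t := by
    intro t ht
    rw [hLId t ht]
  have hψG : ∀ t ∈ Icc t0 T, HasDerivWithinAt ψ (G (t, ψ t)) (Icc t0 T) t := by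
    intro t ht
    have h := (hψd t).hasDerivWithinAt (s := Icc t0 T)
    have heq : g0 t = G (t, ψ t) := by
      simp only [hg0]
      rw [hφbareq t ht, ← hψeq t ht]
    rwa [heq] at h
  -- strict bounds for ψ
  have hαψ : ∀ t ∈ Ioc t0 T, α t < ψ t := by
    refine strict_comp hαd hψG (hα0.trans_eq hψ0.symm) ?_
    intro s hs heq
    have h1 := hαf s hs
    rw [← heq, hGeq s hs (α s) (hαm s hs)]
    exact h1
  have hψβ : ∀ t ∈ Ioc t0 T, ψ t < β t := by
    refine strict_comp hψG hβd (hψ0.trans_le hβ0) ?_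
    intro s hs heq
    rw [heq, hGeq s hs (β s) (hβm s hs)]
    exact hβf s hs
  refine ⟨ψ, hψ0, fun t ht => ?_⟩
  have hval : G (t, ψ t) = f t (ψ t) := by
    rcases eq_or_lt_of_le ht.1 with h | h
    · rw [← h, hψ0]
      exact hGeq t0 ht0m y0 hy0
    · have h1 := hαψ t ⟨h, ht.2⟩
      have h2 := hψβ t ⟨h, ht.2⟩
      exact hGeq t ht (ψ t) ⟨(hαm t ht).1.trans h1.le, h2.le.trans (hβm t ht).2⟩
  rw [← hval]
  exact hψG t ht



/-- Fourth version of Peano's Theorem, parts 1 and 2: if the problem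
`y' = f(t,y)`, `y t0 = y0` on `I = [t0, t0+a]` has a strict lower solution `α`
and a strict upper solution `β`, then (1) it has a solution on `I`; (2) any
solution on a subinterval `[t0, t0+ε]` (`0 < ε < a`) extends to a solution on
all of `I`, and every solution on `I` satisfies `α < φ < β` on `(t0, t0+a]`. -/
theorem peano_strict_bounds (t0 y0 a : ℝ) (ha : 0 < a)
    (f : ℝ → ℝ → ℝ)
    (hf : ContinuousOn (fun p : ℝ × ℝ => f p.1 p.2)
      (Icc t0 (t0 + a) ×ˢ (univ : Set ℝ)))
    (α β α' β' : ℝ → ℝ)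
    (hαd : ∀ t ∈ Icc t0 (t0 + a), HasDerivWithinAt α (α' t) (Icc t0 (t0 + a)) t)
    (hαc : ContinuousOn α' (Icc t0 (t0 + a)))
    (hα0 : α t0 ≤ y0)
    (hαf : ∀ t ∈ Icc t0 (t0 + a), α' t < f t (α t))
    (hβd : ∀ t ∈ Icc t0 (t0 + a), HasDerivWithinAt β (β' t) (Icc t0 (t0 + a)) t)
    (hβc : ContinuousOn β' (Icc t0 (t0 + a)))
    (hβ0 : y0 ≤ β t0)
    (hβf : ∀ t ∈ Icc t0 (t0 + a), f t (β t) < β' t) :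
    (∃ φ : ℝ → ℝ, φ t0 = y0 ∧
      ∀ t ∈ Icc t0 (t0 + a),
        HasDerivWithinAt φ (f t (φ t)) (Icc t0 (t0 + a)) t) ∧
    (∀ ε : ℝ, 0 < ε → ε < a → ∀ φ : ℝ → ℝ, φ t0 = y0 →
      (∀ t ∈ Icc t0 (t0 + ε),
        HasDerivWithinAt φ (f t (φ t)) (Icc t0 (t0 + ε)) t) →
      ∃ ψ : ℝ → ℝ, ψ t0 = y0 ∧
        (∀ t ∈ Icc t0 (t0 + a),
          HasDerivWithinAt ψ (f t (ψ t)) (Icc t0 (t0 + a)) t) ∧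
        (∀ t ∈ Icc t0 (t0 + ε), ψ t = φ t)) ∧
    (∀ φ : ℝ → ℝ, φ t0 = y0 →
      (∀ t ∈ Icc t0 (t0 + a),
        HasDerivWithinAt φ (f t (φ t)) (Icc t0 (t0 + a)) t) →
      ∀ t ∈ Ioc t0 (t0 + a), α t < φ t ∧ φ t < β t) := by
  have hTa : t0 < t0 + a := by linarith
  refine ⟨?_, ?_, ?_⟩
  · exact peano_exists t0 (t0 + a) y0 hTa f hf α β α' β' hαd hα0 hαf hβd hβ0 hβf
  · -- part 2 : extension
    intro ε hε hεa φ hφ0 hφd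
    have ht01 : t0 < t0 + ε := by linarith
    have ht1a : t0 + ε < t0 + a := by linarith
    have hsub1 : Icc t0 (t0 + ε) ⊆ Icc t0 (t0 + a) := Icc_subset_Icc le_rfl ht1a.le
    have hsub2 : Icc (t0 + ε) (t0 + a) ⊆ Icc t0 (t0 + a) := Icc_subset_Icc ht01.le le_rfl
    -- strict bounds at the junction point
    have hα1 : α (t0 + ε) < φ (t0 + ε) := by
      refine strict_comp (fun t ht => (hαd t (hsub1 ht)).mono hsub1) hφd
        (hα0.trans_eq hφ0.symm) ?_ (t0 + ε) ⟨ht01, le_rfl⟩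
      intro s hs heq
      have h1 := hαf s (hsub1 hs)
      rwa [heq] at h1
    have hβ1 : φ (t0 + ε) < β (t0 + ε) := by
      refine strict_comp hφd (fun t ht => (hβd t (hsub1 ht)).mono hsub1)
        (hφ0.trans_le hβ0) ?_ (t0 + ε) ⟨ht01, le_rfl⟩
      intro s hs heq
      rw [heq]
      exact hβf s (hsub1 hs)
    obtain ⟨χ, hχ1, hχd⟩ := peano_exists (t0 + ε) (t0 + a) (φ (t0 + ε)) ht1a f
      (hf.mono (prod_mono hsub2 (subset_refl _))) α β α' β'
      (fun t ht => (hαd t (hsub2 ht)).mono hsub2) hα1.le (fun t ht => hαf t (hsub2 ht))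
      (fun t ht => (hβd t (hsub2 ht)).mono hsub2) hβ1.le (fun t ht => hβf t (hsub2 ht))
    classical
    set ψ : ℝ → ℝ := fun t => if t ≤ t0 + ε then φ t else χ t with hψdef
    have hψφ : ∀ t ∈ Icc t0 (t0 + ε), ψ t = φ t := fun t ht => if_pos ht.2
    have hψχ : ∀ t ∈ Icc (t0 + ε) (t0 + a), ψ t = χ t := by
      intro t ht
      rcases lt_or_eq_of_le ht.1 with h | h
      · exact if_neg (not_le.mpr h)
      · rw [← h]
        simp only [hψdef, if_pos le_rfl]
        rw [hχ1]
    refine ⟨ψ, by rw [hψφ t0 ⟨le_rfl, ht01.le⟩]; exact hφ0, ?_, fun t ht => hψφ t ht⟩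
    intro t ht
    rcases lt_trichotomy t (t0 + ε) with h | h | h
    · have htm : t ∈ Icc t0 (t0 + ε) := ⟨ht.1, h.le⟩
      have hset : Icc t0 (t0 + ε) =ᶠ[nhds t] Icc t0 (t0 + a) := by
        rw [Filter.eventuallyEq_set]
        filter_upwards [Iio_mem_nhds h] with s hs
        simp only [mem_Icc]
        exact ⟨fun h1 => ⟨h1.1, h1.2.trans ht1a.le⟩, fun h1 => ⟨h1.1, (le_of_lt hs)⟩⟩
      have hd2 : HasDerivWithinAt ψ (f t (φ t)) (Icc t0 (t0 + ε)) t :=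
        (hφd t htm).congr hψφ (hψφ t htm)
      rw [hψφ t htm]
      exact (hasDerivWithinAt_congr_set hset).mp hd2
    · have hunion : Icc t0 (t0 + ε) ∪ Icc (t0 + ε) (t0 + a) = Icc t0 (t0 + a) :=
        Icc_union_Icc_eq_Icc ht01.le ht1a.le
      have hm1 : t0 + ε ∈ Icc t0 (t0 + ε) := ⟨ht01.le, le_rfl⟩
      have hm2 : t0 + ε ∈ Icc (t0 + ε) (t0 + a) := ⟨le_rfl, ht1a.le⟩
      have hψt1 : ψ (t0 + ε) = φ (t0 + ε) := hψφ _ hm1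
      have h1 : HasDerivWithinAt ψ (f (t0 + ε) (φ (t0 + ε))) (Icc t0 (t0 + ε)) (t0 + ε) :=
        (hφd _ hm1).congr hψφ hψt1
      have h2 : HasDerivWithinAt ψ (f (t0 + ε) (χ (t0 + ε))) (Icc (t0 + ε) (t0 + a)) (t0 + ε) :=
        (hχd _ hm2).congr hψχ (hψχ _ hm2)
      rw [hχ1] at h2
      have h3 := h1.union h2
      rw [hunion] at h3
      rw [h, hψt1]
      exact h3
    · have htm : t ∈ Icc (t0 + ε) (t0 + a) := ⟨h.le, ht.2⟩
      have hset : Icc (t0 + ε) (t0 + a) =ᶠ[nhds t] Icc t0 (t0 + a) := by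
        rw [Filter.eventuallyEq_set]
        filter_upwards [Ioi_mem_nhds h] with s hs
        simp only [mem_Icc]
        exact ⟨fun h1 => ⟨ht01.le.trans h1.1, h1.2⟩, fun h1 => ⟨le_of_lt hs, h1.2⟩⟩
      have hd2 : HasDerivWithinAt ψ (f t (χ t)) (Icc (t0 + ε) (t0 + a)) t :=
        (hχd t htm).congr hψχ (hψχ t htm)
      rw [hψχ t htm]
      exact (hasDerivWithinAt_congr_set hset).mp hd2
  · -- part 3 : strict bounds
    intro φ hφ0 hφd t ht
    constructor
    · refine strict_comp hαd hφd (hα0.trans_eq hφ0.symm) ?_ t ht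
      intro s hs heq
      have h1 := hαf s hs
      rwa [heq] at h1
    · refine strict_comp hφd hβd (hφ0.trans_le hβ0) ?_ t ht
      intro s hs heq
      rw [heq]
      exact hβf s hs
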